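/- Let N* : ℝ → [0,∞) be a Young function, q > 2 and κ ∈ {0,1}, and suppose N*(r·s) ≤ r^q·(N*(s) + 2κ) for all r ≥ 2 and s ≥ 0. Let N(s) := sup{ |s|·r − N*(r) : r ≥ 0 } be the conjugate of N*. Then for every ε ∈ (0, 2^{1−q}] and every s ∈ ℝ: N(ε·s) ≤ ε^{q/(q−1)}·N(s) + 2κ. (Scaling inequality established in the proof of the paper's Proposition 3.8, verification of condition (K)(i).) -/

import Mathlib

open Filter

/-- A Young function: continuous, convex, even, nonnegative, vanishing exactly at `0`,
with `N s / s → 0` as `s → 0⁺` and `N s / s → ∞` as `s → ∞`. -/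
def IsYoungFunction (N : ℝ → ℝ) : Prop :=
  Continuous N ∧ ConvexOn ℝ Set.univ N ∧ (∀ s, N (-s) = N s) ∧
  (∀ s, 0 ≤ N s) ∧ (∀ s, N s = 0 ↔ s = 0) ∧
  Tendsto (fun s => N s / s) (nhdsWithin 0 (Set.Ioi 0)) (nhds 0) ∧
  Tendsto (fun s => N s / s) atTop atTop

/-- The conjugate Young function `M†(s) := sup { |s|·r − M(r) : r ≥ 0 }`. -/
noncomputable def youngConj (M : ℝ → ℝ) (s : ℝ) : ℝ :=
  sSup {v : ℝ | ∃ r : ℝ, 0 ≤ r ∧ v = |s| * r - M r}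

lemma young_bddAbove (Nstar : ℝ → ℝ) (hNs : IsYoungFunction Nstar) (s : ℝ) :
    BddAbove {v : ℝ | ∃ r : ℝ, 0 ≤ r ∧ v = |s| * r - Nstar r} := by
  obtain ⟨hc, -, -, -, -, -, htop⟩ := hNs
  obtain ⟨R, hR⟩ := Filter.eventually_atTop.1 (htop.eventually_ge_atTop (|s|))
  set R' := max R 1 with hR'
  have hcont : ContinuousOn (fun r => |s| * r - Nstar r) (Set.Icc 0 R') :=
    (continuous_const.mul continuous_id).sub hc |>.continuousOn
  obtain ⟨C, hC⟩ := (isCompact_Icc (a := (0:ℝ)) (b := R')).bddAbove_image hcont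
  refine ⟨max C 0, ?_⟩
  rintro v ⟨r, hr, rfl⟩
  by_cases hle : r ≤ R'
  · have : |s| * r - Nstar r ∈ (fun r => |s| * r - Nstar r) '' Set.Icc 0 R' :=
      ⟨r, ⟨hr, hle⟩, rfl⟩
    exact le_trans (hC this) (le_max_left _ _)
  · push_neg at hle
    have hrR : R ≤ r := le_trans (le_max_left _ _) hle.le
    have hr1 : (1:ℝ) ≤ r := le_trans (le_max_right _ _) hle.le
    have h1 := hR r hrR
    have : |s| * r ≤ Nstar r := by
      have hrpos : (0:ℝ) < r := by linarith
      calc |s| * r ≤ (Nstar r / r) * r := by nlinarith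
        _ = Nstar r := div_mul_cancel₀ _ hrpos.ne'
    have : |s| * r - Nstar r ≤ 0 := by linarith
    exact le_trans this (le_max_right _ _)

/-- Scaling inequality from the proof of the paper's Proposition 3.8, condition (K)(i):
if `N*` satisfies `N*(r s) ≤ r^q (N*(s) + 2κ)` for `r ≥ 2, s ≥ 0`, then its conjugate
`N` satisfies `N(ε s) ≤ ε^{q/(q−1)} N(s) + 2κ` for all `ε ∈ (0, 2^{1−q}]`. -/
theorem stmt10 (Nstar : ℝ → ℝ) (hNs : IsYoungFunction Nstar)
    (q : ℝ) (hq : 2 < q) (κ : ℝ) (hκ : κ = 0 ∨ κ = 1)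
    (hΔ : ∀ r s : ℝ, 2 ≤ r → 0 ≤ s → Nstar (r * s) ≤ r ^ q * (Nstar s + 2 * κ)) :
    ∀ ε : ℝ, 0 < ε → ε ≤ (2 : ℝ) ^ (1 - q) → ∀ s : ℝ,
      youngConj Nstar (ε * s) ≤ ε ^ (q / (q - 1)) * youngConj Nstar s + 2 * κ := by
  intro ε hε hε2 s
  have hbdd := young_bddAbove Nstar hNs
  have hq1 : (0:ℝ) < q - 1 := by linarith
  have hκ0 : (0:ℝ) ≤ κ := by rcases hκ with h | h <;> simp [h]
  have hN0 : Nstar 0 = 0 := (hNs.2.2.2.2.1 0).mpr rfl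
  have hNs_nonneg : 0 ≤ youngConj Nstar s := by
    apply le_csSup (hbdd s)
    exact ⟨0, le_refl 0, by simp [hN0]⟩
  set lam := ε ^ ((1:ℝ)/(q-1)) with hlam
  have hlam_pos : 0 < lam := Real.rpow_pos_of_pos hε _
  have hlam_le : lam ≤ 1/2 := by
    calc lam ≤ ((2:ℝ)^(1-q)) ^ ((1:ℝ)/(q-1)) :=
          Real.rpow_le_rpow hε.le hε2 (by positivity)
      _ = 2 ^ ((1-q) * (1/(q-1))) := (Real.rpow_mul (by norm_num) _ _).symm
      _ = 2 ^ (-1:ℝ) := by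
          congr 1
          field_simp
          ring
      _ = 1/2 := by
          rw [Real.rpow_neg_one]; norm_num
  have h2lam : 2 ≤ lam⁻¹ := by
    have hinv : lam * lam⁻¹ = 1 := mul_inv_cancel₀ hlam_pos.ne'
    nlinarith
  have hlamq : lam ^ q = ε ^ (q/(q-1)) := by
    rw [hlam, ← Real.rpow_mul hε.le]
    congr 1
    ring
  have hεlam : ε * lam = lam ^ q := by
    rw [hlamq]
    have : ε * lam = ε ^ ((1:ℝ) + 1/(q-1)) := by
      rw [Real.rpow_add hε, Real.rpow_one]
    rw [this]
    congr 1
    field_simp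
    ring
  have hq_pos : 0 < lam ^ q := Real.rpow_pos_of_pos hlam_pos q
  apply Real.sSup_le
  · rintro v ⟨r, hr, rfl⟩
    set t := lam⁻¹ * r with ht_def
    have ht : 0 ≤ t := mul_nonneg (inv_nonneg.mpr hlam_pos.le) hr
    have h1 := hΔ lam⁻¹ r h2lam hr
    have hinvq : (lam⁻¹) ^ q = (lam ^ q)⁻¹ := Real.inv_rpow hlam_pos.le q
    rw [hinvq] at h1
    have hNst : lam ^ q * Nstar t - 2 * κ ≤ Nstar r := by
      have := mul_le_mul_of_nonneg_left h1 hq_pos.le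
      rw [mul_inv_cancel_left₀ hq_pos.ne'] at this
      linarith
    have h3 : |s| * t - Nstar t ≤ youngConj Nstar s :=
      le_csSup (hbdd s) ⟨t, ht, rfl⟩
    have hr_eq : lam * t = r := by
      rw [ht_def, mul_inv_cancel_left₀ hlam_pos.ne']
    have habs : |ε * s| * r = lam ^ q * (|s| * t) := by
      rw [abs_mul, abs_of_pos hε, ← hr_eq, ← hεlam]
      ring
    rw [habs, ← hlamq]
    have h4 : lam ^ q * (|s| * t) - lam ^ q * Nstar t ≤ lam ^ q * youngConj Nstar s := by
      rw [← mul_sub]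
      exact mul_le_mul_of_nonneg_left h3 hq_pos.le
    linarith
  · have : (0:ℝ) ≤ ε ^ (q/(q-1)) := Real.rpow_nonneg hε.le _
    nlinarith
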